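/- Let μ₂ > 0 and suppose for each i ∈ {1,…,N}, μ₂(ψ_i^t − ψ₀^{t-1}) = g_i(ω_i^t, ψ_i^t) − g_i(ω_i^{t-1}, ψ_i^{t-1}) where each g_i is L₂₁-Lipschitz in ω and L₂₂-Lipschitz in ψ. Then μ₂² ∑_{i≠j} ‖ψ_i^t − ψ_j^t‖² ≤ 8N(L₂₂² + L₂₁²) ∑_i (‖ψ_i^t − ψ_i^{t-1}‖² + ‖ω_i^t − ω_i^{t-1}‖²) in the sense that μ₂²/(2N) ∑_{i≠j}‖ψ_i^t − ψ_j^t‖² ≤ 4L₂₂² ∑_i ‖ψ_i^t − ψ_i^{t-1}‖² + 4L₂₁² ∑_i ‖ω_i^t − ω_i^{t-1}‖². -/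
import Mathlib


/-- Bound on the deviation among clients' maximization variables. -/
theorem stmt_9 {N d₁ d₂ : ℕ} (μ₂ : ℝ) (hμ₂ : 0 < μ₂)
    (g : Fin N → EuclideanSpace ℝ (Fin d₁) → EuclideanSpace ℝ (Fin d₂) → EuclideanSpace ℝ (Fin d₂))
    (L21 L22 : ℝ)
    (hL21 : ∀ i ω ω' ψ, ‖g i ω ψ - g i ω' ψ‖ ≤ L21 * ‖ω - ω'‖)
    (hL22 : ∀ i ω ψ ψ', ‖g i ω ψ - g i ω ψ'‖ ≤ L22 * ‖ψ - ψ'‖)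
    (ψt ψtm : Fin N → EuclideanSpace ℝ (Fin d₂))
    (ωt ωtm : Fin N → EuclideanSpace ℝ (Fin d₁))
    (ψ₀ : EuclideanSpace ℝ (Fin d₂))
    (hupd : ∀ i, μ₂ • (ψt i - ψ₀) = g i (ωt i) (ψt i) - g i (ωtm i) (ψtm i)) :
    μ₂ ^ 2 / (2 * N) * ∑ i, ∑ j ∈ Finset.univ \ {i}, ‖ψt i - ψt j‖ ^ 2 ≤
      4 * L22 ^ 2 * ∑ i, ‖ψt i - ψtm i‖ ^ 2
        + 4 * L21 ^ 2 * ∑ i, ‖ωt i - ωtm i‖ ^ 2 := by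
  set B : Fin N → ℝ := fun i =>
    4 * L22 ^ 2 * ‖ψt i - ψtm i‖ ^ 2 + 4 * L21 ^ 2 * ‖ωt i - ωtm i‖ ^ 2 with hB
  have hBnn : ∀ i, 0 ≤ B i := by intro i; simp only [hB]; positivity
  set c : Fin N → ℝ := fun i => ‖g i (ωt i) (ψt i) - g i (ωtm i) (ψtm i)‖ with hc
  have hcnn : ∀ k, 0 ≤ c k := fun k => norm_nonneg _
  have hc2 : ∀ k, 2 * c k ^ 2 ≤ B k := by
    intro k
    have h1 : c k ≤ L22 * ‖ψt k - ψtm k‖ + L21 * ‖ωt k - ωtm k‖ := by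
      calc c k ≤ ‖g k (ωt k) (ψt k) - g k (ωt k) (ψtm k)‖
          + ‖g k (ωt k) (ψtm k) - g k (ωtm k) (ψtm k)‖ := by
            simpa [hc] using norm_sub_le_norm_sub_add_norm_sub
              (g k (ωt k) (ψt k)) (g k (ωt k) (ψtm k)) (g k (ωtm k) (ψtm k))
        _ ≤ _ := add_le_add (hL22 k _ _ _) (hL21 k _ _ _)
    have h2 : c k ^ 2 ≤ (L22 * ‖ψt k - ψtm k‖ + L21 * ‖ωt k - ωtm k‖) ^ 2 :=
      pow_le_pow_left₀ (hcnn k) h1 2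
    simp only [hB]
    nlinarith [sq_nonneg (L22 * ‖ψt k - ψtm k‖ - L21 * ‖ωt k - ωtm k‖)]
  have key : ∀ i j, μ₂ ^ 2 * ‖ψt i - ψt j‖ ^ 2 ≤ B i + B j := by
    intro i j
    have heq : μ₂ • (ψt i - ψt j) =
        (g i (ωt i) (ψt i) - g i (ωtm i) (ψtm i))
          - (g j (ωt j) (ψt j) - g j (ωtm j) (ψtm j)) := by
      rw [← hupd i, ← hupd j]; module
    have hd : μ₂ * ‖ψt i - ψt j‖ ≤ c i + c j := by
      calc μ₂ * ‖ψt i - ψt j‖ = ‖μ₂ • (ψt i - ψt j)‖ := by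
            rw [norm_smul, Real.norm_eq_abs, abs_of_pos hμ₂]
        _ ≤ c i + c j := by rw [heq]; exact norm_sub_le _ _
    have hsq : (μ₂ * ‖ψt i - ψt j‖) * (μ₂ * ‖ψt i - ψt j‖) ≤ (c i + c j) * (c i + c j) :=
      mul_le_mul hd hd (mul_nonneg hμ₂.le (norm_nonneg _)) (add_nonneg (hcnn i) (hcnn j))
    nlinarith [hc2 i, hc2 j, sq_nonneg (c i - c j), hsq]
  have hsum : μ₂ ^ 2 * ∑ i, ∑ j ∈ Finset.univ \ {i}, ‖ψt i - ψt j‖ ^ 2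
      ≤ 2 * N * ∑ i, B i := by
    rw [Finset.mul_sum]
    calc ∑ i, μ₂ ^ 2 * ∑ j ∈ Finset.univ \ {i}, ‖ψt i - ψt j‖ ^ 2
        ≤ ∑ i : Fin N, ∑ j ∈ Finset.univ \ {i}, (B i + B j) := by
          refine Finset.sum_le_sum fun i _ => ?_
          rw [Finset.mul_sum]
          exact Finset.sum_le_sum fun j _ => key i j
      _ ≤ ∑ i : Fin N, ((N : ℝ) * B i + ∑ j, B j) := by
          refine Finset.sum_le_sum fun i _ => ?_
          rw [Finset.sum_add_distrib]
          gcongr ?_ + ?_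
          · rw [Finset.sum_const, nsmul_eq_mul]
            have hcard : ((Finset.univ \ {i} : Finset (Fin N)).card : ℝ) ≤ N := by
              exact_mod_cast Finset.card_le_card (Finset.sdiff_subset) |>.trans
                (by simp)
            exact mul_le_mul_of_nonneg_right hcard (hBnn i)
          · exact Finset.sum_le_sum_of_subset_of_nonneg (Finset.subset_univ _)
              (fun j _ _ => hBnn j)
      _ = 2 * N * ∑ i, B i := by
          rw [Finset.sum_add_distrib, ← Finset.mul_sum, Finset.sum_const,
            Finset.card_univ, Fintype.card_fin, nsmul_eq_mul]
          ring
  have hBsum : ∑ i, B i = 4 * L22 ^ 2 * ∑ i, ‖ψt i - ψtm i‖ ^ 2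
      + 4 * L21 ^ 2 * ∑ i, ‖ωt i - ωtm i‖ ^ 2 := by
    simp only [hB, Finset.sum_add_distrib, Finset.mul_sum]
  rcases Nat.eq_zero_or_pos N with hN | hN
  · subst hN
    simp
  · have h2N : (0 : ℝ) < 2 * N := by positivity
    rw [div_mul_eq_mul_div, div_le_iff₀ h2N]
    rw [← hBsum]
    calc μ₂ ^ 2 * ∑ i, ∑ j ∈ Finset.univ \ {i}, ‖ψt i - ψt j‖ ^ 2
        ≤ 2 * N * ∑ i, B i := hsum
      _ = (∑ i, B i) * (2 * N) := by ring
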